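/- Let G be a simple graph on vertex set V = {1,…,n} with symmetric susceptances b(u,v) = b(v,u) for adjacent u,v, let S ⊆ V be nonempty and proper, and let A be the set of edges cut by S. Let M be any real matrix with n columns, each of whose rows is either a line power-flow measurement row (θ ↦ b(u,v)(θ_u − θ_v)) for an edge {u,v} ∉ A, or a bus injection measurement row (θ ↦ Σ_{u adjacent to v} b(v,u)(θ_v − θ_u)) for a vertex v not incident to any edge of A. Then for every column index j₀, the matrix obtained from M by deleting column j₀ has rank strictly less than n − 1. In particular, removing all line power-flow measurements on A and all injection measurements at buses connected by edges of A renders the network unobservable. -/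

import Mathlib

open Finset Matrix

/-- The row of the measurement matrix corresponding to the line power-flow measurement
`θ ↦ b u v * (θ u - θ v)` on the edge `{u, v}`. -/
def flowRow (n : ℕ) (b : Fin n → Fin n → ℝ) (u v : Fin n) : Fin n → ℝ :=
  fun x => if x = u then b u v else if x = v then -(b u v) else 0

/-- The row of the measurement matrix corresponding to the bus injection measurement
`θ ↦ ∑_{u adjacent to x} b x u * (θ x - θ u)` at bus `x`. -/
def injRow (n : ℕ) (G : SimpleGraph (Fin n)) [DecidableRel G.Adj]
    (b : Fin n → Fin n → ℝ) (x : Fin n) : Fin n → ℝ :=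
  fun y => if y = x then ∑ u ∈ Finset.univ.filter (fun u => G.Adj x u), b x u
           else if G.Adj x y then -(b x y) else 0

/-- Let `S` be a nonempty proper set of buses. If every row of `M` is either
a line power-flow measurement row for an edge not cut by `S`, or a bus injection
measurement row for a bus not incident to any cut edge, then deleting any one column of
`M` leaves a matrix of rank strictly less than `n - 1`: the network is unobservable
for any choice of reference bus. -/
theorem stmt9 (m n : ℕ) (G : SimpleGraph (Fin n)) [DecidableRel G.Adj]
    (b : Fin n → Fin n → ℝ) (hb : ∀ u v : Fin n, G.Adj u v → b u v = b v u)
    (S : Finset (Fin n)) (hS1 : S.Nonempty) (hS2 : S ≠ Finset.univ)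
    (M : Matrix (Fin m) (Fin n) ℝ)
    (hrows : ∀ r : Fin m,
      (∃ u v : Fin n, G.Adj u v ∧ ((u ∈ S) ↔ (v ∈ S)) ∧ M r = flowRow n b u v) ∨
      (∃ x : Fin n, (∀ u : Fin n, G.Adj x u → ((x ∈ S) ↔ (u ∈ S))) ∧
        M r = injRow n G b x)) :
    ∀ j₀ : Fin n,
      (M.submatrix (id : Fin m → Fin m) (fun c : {l : Fin n // l ≠ j₀} => c.1)).rank
        < n - 1 := by
  intro j₀
  -- the kernel vector
  set w : Fin n → ℝ := fun x => (if x ∈ S then 1 else 0) - (if j₀ ∈ S then 1 else 0)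
    with hw_def
  have hw_eq : ∀ u v : Fin n, ((u ∈ S) ↔ (v ∈ S)) → w u = w v := by
    intro u v h
    simp only [hw_def]
    by_cases hu : u ∈ S
    · simp [hu, h.mp hu]
    · have hv : v ∉ S := fun hv => hu (h.mpr hv)
      simp [hu, hv]
  have hwj : w j₀ = 0 := by simp [hw_def]
  -- every row of M is orthogonal to w
  have hrow0 : ∀ r : Fin m, ∑ y, M r y * w y = 0 := by
    intro r
    rcases hrows r with ⟨u, v, huv, hcut, hM⟩ | ⟨x, hx, hM⟩
    · have hune : u ≠ v := G.ne_of_adj huv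
      have hterm : ∀ y, M r y * w y =
          (if y = u then b u v * w y else 0) + (if y = v then -(b u v) * w y else 0) := by
        intro y
        rw [hM]
        unfold flowRow
        by_cases h1 : y = u <;> by_cases h2 : y = v <;> simp_all
      rw [Finset.sum_congr rfl (fun y _ => hterm y), Finset.sum_add_distrib]
      simp only [Finset.sum_ite_eq', Finset.mem_univ, if_true]
      rw [hw_eq u v hcut]
      ring
    · set A : ℝ := ∑ u ∈ Finset.univ.filter (fun u => G.Adj x u), b x u with hA
      have hterm : ∀ y, M r y * w y =
          (if y = x then A * w y else 0) + (if G.Adj x y then -(b x y) * w y else 0) := by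
        intro y
        rw [hM]
        unfold injRow
        by_cases h1 : y = x
        · subst h1; simp [G.irrefl]; exact Or.inl hA.symm
        · simp only [h1, if_false]
          by_cases h2 : G.Adj x y <;> simp [h2]
      rw [Finset.sum_congr rfl (fun y _ => hterm y), Finset.sum_add_distrib]
      simp only [Finset.sum_ite_eq', Finset.mem_univ, if_true]
      have h1 : ∑ y, (if G.Adj x y then -(b x y) * w y else 0)
          = ∑ y ∈ Finset.univ.filter (fun y => G.Adj x y), -(b x y) * w y := by
        rw [Finset.sum_filter]
      rw [h1]
      have hcongr : ∀ y ∈ Finset.univ.filter (fun y => G.Adj x y),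
          -(b x y) * w y = -(b x y) * w x := by
        intro y hy
        rw [Finset.mem_filter] at hy
        rw [hw_eq y x (Iff.symm (hx y hy.2))]
      rw [Finset.sum_congr rfl hcongr, ← Finset.sum_mul, Finset.sum_neg_distrib, ← hA]
      ring
  set N := M.submatrix (id : Fin m → Fin m) (fun c : {l : Fin n // l ≠ j₀} => c.1)
    with hN
  -- restricted kernel vector
  set w' : {l : Fin n // l ≠ j₀} → ℝ := fun c => w c.1 with hw'
  have hker : N.mulVec w' = 0 := by
    funext r
    have hsub : ∑ c : {l : Fin n // l ≠ j₀}, M r c.1 * w c.1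
        = ∑ y ∈ Finset.univ.erase j₀, M r y * w y := by
      rw [Finset.sum_subtype (p := fun l => l ≠ j₀) (Finset.univ.erase j₀)
        (by intro x; simp [Finset.mem_erase]) (fun y => M r y * w y)]
    have hmv : (N.mulVec w') r = ∑ y ∈ Finset.univ.erase j₀, M r y * w y := by
      simp only [Matrix.mulVec, dotProduct, hN, Matrix.submatrix_apply, id_eq, hw']
      exact hsub
    simp only [Pi.zero_apply]
    rw [hmv]
    have hadd := Finset.sum_erase_add Finset.univ (fun y => M r y * w y)
      (Finset.mem_univ j₀)
    have hj : M r j₀ * w j₀ = 0 := by rw [hwj]; ring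
    have h0 := hrow0 r
    linarith [hadd, hj, h0]
  -- the restricted vector is nonzero
  have hw'ne : w' ≠ 0 := by
    obtain ⟨s, hs⟩ := hS1
    obtain ⟨t, ht⟩ : ∃ t, t ∉ S := by
      by_contra h
      push_neg at h
      exact hS2 (Finset.eq_univ_iff_forall.mpr h)
    intro h0
    by_cases hj : j₀ ∈ S
    · have htj : t ≠ j₀ := fun h => ht (h ▸ hj)
      have := congrFun h0 ⟨t, htj⟩
      simp [hw', hw_def, ht, hj] at this
    · have hsj : s ≠ j₀ := fun h => hj (h ▸ hs)
      have := congrFun h0 ⟨s, hsj⟩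
      simp [hw', hw_def, hs, hj] at this
  have hkermem : w' ∈ LinearMap.ker N.mulVecLin := by
    rw [LinearMap.mem_ker, Matrix.mulVecLin_apply, hker]
  have hkerpos : 0 < Module.finrank ℝ (LinearMap.ker N.mulVecLin) := by
    haveI : Nontrivial (LinearMap.ker N.mulVecLin) :=
      nontrivial_of_ne ⟨w', hkermem⟩ 0 (by
        intro h
        exact hw'ne (congrArg Subtype.val h))
    exact Module.finrank_pos
  have hcard : Fintype.card {l : Fin n // l ≠ j₀} = n - 1 := by
    have := Fintype.card_subtype_compl (fun l : Fin n => l = j₀)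
    simp only [Fintype.card_subtype_eq, Fintype.card_fin] at this
    exact this
  have hrn := LinearMap.finrank_range_add_finrank_ker N.mulVecLin
  have hdom : Module.finrank ℝ ({l : Fin n // l ≠ j₀} → ℝ) = n - 1 := by
    rw [Module.finrank_pi]; exact hcard
  rw [hdom] at hrn
  have hrank : N.rank = Module.finrank ℝ (LinearMap.range N.mulVecLin) := rfl
  rw [hrank]
  omega
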